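/- arXiv:1810.10406 — 3 statements merged into one kernel-verified Lean document; each statement's English description precedes it below -/
import Mathlib

section
/- Let L and D be N×N matrices with non-negative real entries such that for all j,l ∈ {1,…,N}: L_{jl} ≤ L_{jj}, L_{jl} ≤ L_{ll}, and D_{jl} ≤ max{D_{jj}, D_{ll}}. Then (1/N) · Σ_{j,l=1}^{N} √(L_{jl} D_{jl}) ≤ 2 · Σ_{j=1}^{N} √(L_{jj} D_{jj}). -/
/-- Entrywise matrix bound (Lemma on N×N nonnegative matrices). -/
theorem stmt0 (N : ℕ) (L D : Fin N → Fin N → ℝ)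
    (hL : ∀ j l, 0 ≤ L j l) (hD : ∀ j l, 0 ≤ D j l)
    (hL1 : ∀ j l, L j l ≤ L j j) (hL2 : ∀ j l, L j l ≤ L l l)
    (hDm : ∀ j l, D j l ≤ max (D j j) (D l l)) :
    (1 / N : ℝ) * ∑ j, ∑ l, Real.sqrt (L j l * D j l) ≤
      2 * ∑ j, Real.sqrt (L j j * D j j) := by
  rcases Nat.eq_zero_or_pos N with h0 | hN
  · subst h0; simp
  have key : ∀ j l, Real.sqrt (L j l * D j l) ≤
      Real.sqrt (L j j * D j j) + Real.sqrt (L l l * D l l) := by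
    intro j l
    rcases max_cases (D j j) (D l l) with ⟨hm, _⟩ | ⟨hm, _⟩
    · have : Real.sqrt (L j l * D j l) ≤ Real.sqrt (L j j * D j j) :=
        Real.sqrt_le_sqrt (mul_le_mul (hL1 j l) ((hDm j l).trans hm.le)
          (hD j l) ((hL j l).trans (hL1 j l)))
      exact this.trans (le_add_of_nonneg_right (Real.sqrt_nonneg _))
    · have : Real.sqrt (L j l * D j l) ≤ Real.sqrt (L l l * D l l) :=
        Real.sqrt_le_sqrt (mul_le_mul (hL2 j l) ((hDm j l).trans hm.le)
          (hD j l) ((hL j l).trans (hL2 j l)))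
      exact this.trans (le_add_of_nonneg_left (Real.sqrt_nonneg _))
  have hsum : (∑ j, ∑ l, Real.sqrt (L j l * D j l)) ≤
      2 * N * ∑ j, Real.sqrt (L j j * D j j) := by
    calc (∑ j, ∑ l, Real.sqrt (L j l * D j l))
        ≤ ∑ j : Fin N, ∑ l : Fin N,
            (Real.sqrt (L j j * D j j) + Real.sqrt (L l l * D l l)) :=
          Finset.sum_le_sum fun j _ => Finset.sum_le_sum fun l _ => key j l
      _ = 2 * N * ∑ j, Real.sqrt (L j j * D j j) := by
          simp [Finset.sum_add_distrib, Finset.mul_sum, Finset.sum_comm]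
          rw [← Finset.sum_add_distrib]
          exact Finset.sum_congr rfl fun x _ => by ring
  have hNpos : (0:ℝ) < N := by exact_mod_cast hN
  rw [div_mul_eq_mul_div, one_mul, div_le_iff₀ hNpos]
  calc (∑ j, ∑ l, Real.sqrt (L j l * D j l)) ≤ 2 * N * ∑ j, Real.sqrt (L j j * D j j) := hsum
    _ = 2 * (∑ j, Real.sqrt (L j j * D j j)) * N := by ring
end

section
/- Let ρ be a density operator on a finite-dimensional Hilbert space H and let Λ be an operator with 0 ≤ Λ ≤ 𝟙 satisfying tr(Λρ) ≥ 1 − ε for some 0 ≤ ε < 1. Then the post-measurement state ρ' := √Λ ρ √Λ / tr(Λρ) satisfies ‖ρ − ρ'‖₁ ≤ 2√ε (gentle measurement lemma). -/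
open Matrix
open scoped ComplexOrder

/-- Trace norm (sum of singular values) of a complex square matrix. -/
noncomputable def traceNorm {m : Type*} [Fintype m] [DecidableEq m] (A : Matrix m m ℂ) : ℝ :=
  ∑ i, Real.sqrt (((Matrix.posSemidef_conjTranspose_mul_self A).isHermitian).eigenvalues i)

/-- The positive semidefinite square root of a positive semidefinite matrix
(as defined in Mathlib of December 2024, since removed). -/
noncomputable def Matrix.PosSemidef.sqrt {n : Type*} [Fintype n] [DecidableEq n]
    {A : Matrix n n ℂ} (hA : A.PosSemidef) : Matrix n n ℂ :=
  hA.1.eigenvectorUnitary.1 * diagonal ((↑) ∘ (√·) ∘ hA.1.eigenvalues) *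
    (star hA.1.eigenvectorUnitary : Matrix n n ℂ)

open scoped MatrixOrder in
lemma Matrix.PosSemidef.sqrt_eq_cfcSqrt {m : Type*} [Fintype m] [DecidableEq m]
    {A : Matrix m m ℂ} (hA : A.PosSemidef) : hA.sqrt = CFC.sqrt A := by
  rw [CFC.sqrt_eq_cfc, cfc_nnreal_eq_real _ A hA.nonneg, hA.1.cfc_eq, Matrix.IsHermitian.cfc,
    Unitary.conjStarAlgAut_apply, Matrix.PosSemidef.sqrt]
  congr 3
  funext i
  simp only [Function.comp_apply, Real.coe_sqrt, Real.coe_toNNReal',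
    max_eq_left (hA.eigenvalues_nonneg i)]
  rfl

open scoped MatrixOrder in
lemma Matrix.PosSemidef.sqrt_mul_self {m : Type*} [Fintype m] [DecidableEq m]
    {A : Matrix m m ℂ} (hA : A.PosSemidef) : hA.sqrt * hA.sqrt = A := by
  rw [hA.sqrt_eq_cfcSqrt]
  exact CFC.sqrt_mul_sqrt_self A hA.nonneg

open scoped MatrixOrder in
lemma Matrix.PosSemidef.posSemidef_sqrt {m : Type*} [Fintype m] [DecidableEq m]
    {A : Matrix m m ℂ} (hA : A.PosSemidef) : hA.sqrt.PosSemidef := by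
  rw [hA.sqrt_eq_cfcSqrt]
  exact (CFC.sqrt_nonneg A).posSemidef

open scoped MatrixOrder in
lemma Matrix.PosSemidef.eq_sqrt_of_sq_eq {m : Type*} [Fintype m] [DecidableEq m]
    {B : Matrix m m ℂ} (hB : B.PosSemidef) {A : Matrix m m ℂ} (hA : A.PosSemidef)
    (h : B ^ 2 = A) : B = hA.sqrt := by
  rw [hA.sqrt_eq_cfcSqrt]
  exact (CFC.sqrt_unique (by rw [← sq]; exact h) hB.nonneg).symm

open scoped InnerProductSpace

variable {n : ℕ}

lemma trace_unitary_conj (U : Matrix.unitaryGroup (Fin n) ℂ) (d : Fin n → ℂ) :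
    ((U : Matrix (Fin n) (Fin n) ℂ) * diagonal d * star (U : Matrix (Fin n) (Fin n) ℂ)).trace
      = ∑ i, d i := by
  rw [trace_mul_cycle, Unitary.coe_star_mul_self, one_mul, trace_diagonal]

lemma trace_eq_sum_eig {P : Matrix (Fin n) (Fin n) ℂ} (hP : P.IsHermitian) :
    P.trace = ((∑ i, hP.eigenvalues i : ℝ) : ℂ) := by
  conv_lhs => rw [hP.spectral_theorem, Unitary.conjStarAlgAut_apply, trace_unitary_conj]
  push_cast
  rfl

lemma trace_re_nonneg {P : Matrix (Fin n) (Fin n) ℂ} (hP : P.PosSemidef) :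
    0 ≤ P.trace.re := by
  rw [trace_eq_sum_eig hP.isHermitian]
  simp only [Complex.ofReal_re]
  exact Finset.sum_nonneg fun i _ => hP.eigenvalues_nonneg i

lemma trace_eq_re {P : Matrix (Fin n) (Fin n) ℂ} (hP : P.PosSemidef) :
    P.trace = (P.trace.re : ℂ) := by
  rw [trace_eq_sum_eig hP.isHermitian]
  simp

lemma sandwich_mul (U : Matrix.unitaryGroup (Fin n) ℂ) (d e : Fin n → ℂ) :
    ((U : Matrix (Fin n) (Fin n) ℂ) * diagonal d * star (U : Matrix (Fin n) (Fin n) ℂ)) *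
      ((U : Matrix (Fin n) (Fin n) ℂ) * diagonal e * star (U : Matrix (Fin n) (Fin n) ℂ))
    = (U : Matrix (Fin n) (Fin n) ℂ) * diagonal (d * e) * star (U : Matrix (Fin n) (Fin n) ℂ) := by
  have hUU : star (U : Matrix (Fin n) (Fin n) ℂ) * U = 1 := Unitary.coe_star_mul_self _
  have h : ((U : Matrix (Fin n) (Fin n) ℂ) * diagonal d * star (U : Matrix (Fin n) (Fin n) ℂ)) *
      ((U : Matrix (Fin n) (Fin n) ℂ) * diagonal e * star (U : Matrix (Fin n) (Fin n) ℂ))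
      = (U : Matrix (Fin n) (Fin n) ℂ) * (diagonal d * (star (U : Matrix (Fin n) (Fin n) ℂ) * U) *
        diagonal e) * star (U : Matrix (Fin n) (Fin n) ℂ) := by noncomm_ring
  rw [h, hUU, mul_one, diagonal_mul_diagonal]
  rfl

lemma traceNorm_hermitian {D : Matrix (Fin n) (Fin n) ℂ} (hD : D.IsHermitian) :
    traceNorm D = ∑ i, |hD.eigenvalues i| := by
  have hQ := Matrix.posSemidef_conjTranspose_mul_self D
  set P : Matrix (Fin n) (Fin n) ℂ :=
    hD.eigenvectorUnitary * diagonal (Complex.ofReal ∘ fun i => |hD.eigenvalues i|) *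
      star (hD.eigenvectorUnitary : Matrix (Fin n) (Fin n) ℂ) with hP
  have hPpsd : P.PosSemidef := by
    apply Matrix.PosSemidef.mul_mul_conjTranspose_same
      (B := (hD.eigenvectorUnitary : Matrix (Fin n) (Fin n) ℂ))
    exact Matrix.posSemidef_diagonal_iff.mpr fun i => by
      simp only [Function.comp_apply]
      exact Complex.zero_le_real.mpr (abs_nonneg _)
  have hsq : P ^ 2 = Dᴴ * D := by
    rw [hD.eq, pow_two, hP, sandwich_mul]
    conv_rhs => rw [hD.spectral_theorem, Unitary.conjStarAlgAut_apply]
    rw [sandwich_mul]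
    have he : (Complex.ofReal ∘ fun i => |hD.eigenvalues i|) *
        (Complex.ofReal ∘ fun i => |hD.eigenvalues i|)
        = (RCLike.ofReal ∘ hD.eigenvalues) * (RCLike.ofReal ∘ hD.eigenvalues) := by
      funext i
      simp only [Pi.mul_apply, Function.comp_apply]
      rw [show (RCLike.ofReal : ℝ → ℂ) = Complex.ofReal from rfl,
        ← Complex.ofReal_mul, ← Complex.ofReal_mul, abs_mul_abs_self]
    rw [he]
  have hPsqrt : P = hQ.sqrt := hPpsd.eq_sqrt_of_sq_eq hQ hsq
  have h1 : traceNorm D = (hQ.sqrt.trace).re := by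
    rw [Matrix.PosSemidef.sqrt, trace_unitary_conj, traceNorm]
    rw [Complex.re_sum]
    simp
  have h2 : (P.trace).re = ∑ i, |hD.eigenvalues i| := by
    rw [hP, trace_unitary_conj, Complex.re_sum]
    simp
  rw [h1, ← hPsqrt, h2]

lemma entry_sq_sum {P : Matrix (Fin n) (Fin n) ℂ} :
    ∑ i, ∑ k, ‖P k i‖ ^ 2 = (Pᴴ * P).trace.re := by
  rw [Matrix.trace, Complex.re_sum]
  congr 1
  funext i
  rw [Matrix.diag_apply, Matrix.mul_apply, Complex.re_sum]
  congr 1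
  funext k
  rw [Matrix.conjTranspose_apply, Complex.star_def, mul_comm, Complex.mul_conj]
  rw [Complex.ofReal_re, Complex.normSq_eq_norm_sq]

lemma key_bound {D X Y : Matrix (Fin n) (Fin n) ℂ} (hD : D.IsHermitian)
    (hXY : D = (2:ℂ)⁻¹ • (X * Yᴴ + Y * Xᴴ)) :
    traceNorm D ≤ Real.sqrt ((Xᴴ * X).trace.re) * Real.sqrt ((Yᴴ * Y).trace.re) := by
  rw [traceNorm_hermitian hD]
  set U : Matrix (Fin n) (Fin n) ℂ := (hD.eigenvectorUnitary : Matrix (Fin n) (Fin n) ℂ) with hU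
  have hUU' : U * star U = 1 := Unitary.coe_mul_star_self _
  set P : Matrix (Fin n) (Fin n) ℂ := Xᴴ * U with hPdef
  set Q : Matrix (Fin n) (Fin n) ℂ := Yᴴ * U with hQdef
  have hG : star U * D * U = (2:ℂ)⁻¹ • (Pᴴ * Q + Qᴴ * P) := by
    rw [hXY, hPdef, hQdef]
    simp only [Matrix.mul_smul, Matrix.smul_mul]
    congr 1
    simp only [conjTranspose_mul, conjTranspose_conjTranspose, star_eq_conjTranspose]
    noncomm_ring
  have hlam : ∀ i, hD.eigenvalues i = ((Pᴴ * Q) i i).re := by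
    intro i
    have h2 : (star U * D * U) i i = (hD.eigenvalues i : ℂ) := by
      have h := hD.conjStarAlgAut_star_eigenvectorUnitary
      simp only [Unitary.conjStarAlgAut_apply, Unitary.coe_star, star_star] at h
      rw [hU, h]
      simp
    have h3 : (star U * D * U) i i = (((Pᴴ * Q) i i).re : ℂ) := by
      rw [hG]
      simp only [Matrix.smul_apply, Matrix.add_apply, smul_eq_mul]
      have h4 : (Qᴴ * P) i i = star ((Pᴴ * Q) i i) := by
        rw [show Qᴴ * P = (Pᴴ * Q)ᴴ by simp [conjTranspose_mul], conjTranspose_apply]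
      rw [h4, Complex.star_def, Complex.add_conj]
      push_cast
      ring
    exact_mod_cast h2.symm.trans h3
  have habs : ∀ i, |hD.eigenvalues i| ≤ ∑ k, ‖P k i‖ * ‖Q k i‖ := by
    intro i
    rw [hlam i]
    refine le_trans (Complex.abs_re_le_norm _) ?_
    rw [Matrix.mul_apply]
    refine le_trans (norm_sum_le _ _) ?_
    apply Finset.sum_le_sum
    intro k _
    rw [Matrix.conjTranspose_apply, norm_mul]
    simp [mul_comm]
  have hUU'' : U * Uᴴ = 1 := by rw [← star_eq_conjTranspose]; exact hUU'
  have hPtr : ∑ i, ∑ k, ‖P k i‖ ^ 2 = (Xᴴ * X).trace.re := by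
    have hPP : P * Pᴴ = Xᴴ * X := by
      rw [hPdef, conjTranspose_mul, conjTranspose_conjTranspose,
        show Xᴴ * U * (Uᴴ * X) = Xᴴ * (U * Uᴴ) * X by noncomm_ring,
        hUU'', mul_one]
    rw [entry_sq_sum, trace_mul_comm, hPP]
  have hQtr : ∑ i, ∑ k, ‖Q k i‖ ^ 2 = (Yᴴ * Y).trace.re := by
    have hQQ : Q * Qᴴ = Yᴴ * Y := by
      rw [hQdef, conjTranspose_mul, conjTranspose_conjTranspose,
        show Yᴴ * U * (Uᴴ * Y) = Yᴴ * (U * Uᴴ) * Y by noncomm_ring,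
        hUU'', mul_one]
    rw [entry_sq_sum, trace_mul_comm, hQQ]
  calc ∑ i, |hD.eigenvalues i|
      ≤ ∑ i, ∑ k, ‖P k i‖ * ‖Q k i‖ :=
        Finset.sum_le_sum fun i _ => habs i
    _ ≤ ∑ i, Real.sqrt (∑ k, ‖P k i‖ ^ 2) *
          Real.sqrt (∑ k, ‖Q k i‖ ^ 2) :=
        Finset.sum_le_sum fun i _ => Real.sum_mul_le_sqrt_mul_sqrt _ _ _
    _ ≤ Real.sqrt (∑ i, Real.sqrt (∑ k, ‖P k i‖ ^ 2) ^ 2) *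
          Real.sqrt (∑ i, Real.sqrt (∑ k, ‖Q k i‖ ^ 2) ^ 2) :=
        Real.sum_mul_le_sqrt_mul_sqrt _ _ _
    _ = Real.sqrt ((Xᴴ * X).trace.re) * Real.sqrt ((Yᴴ * Y).trace.re) := by
        rw [← hPtr, ← hQtr]
        congr 2
        · exact Finset.sum_congr rfl fun i _ => Real.sq_sqrt
            (Finset.sum_nonneg fun k _ => sq_nonneg _)
        · exact Finset.sum_congr rfl fun i _ => Real.sq_sqrt
            (Finset.sum_nonneg fun k _ => sq_nonneg _)

lemma trace_mul_re_nonneg {S ρ : Matrix (Fin n) (Fin n) ℂ} (hS : S.PosSemidef)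
    (hρ : ρ.PosSemidef) : 0 ≤ ((S * ρ).trace).re := by
  have h1 : (S * ρ).trace = (hρ.sqrt * S * hρ.sqrt).trace := by
    conv_lhs => rw [← hρ.sqrt_mul_self]
    rw [show S * (hρ.sqrt * hρ.sqrt) = S * hρ.sqrt * hρ.sqrt by noncomm_ring]
    exact trace_mul_cycle S hρ.sqrt hρ.sqrt
  rw [h1]
  apply trace_re_nonneg
  have := hS.mul_mul_conjTranspose_same hρ.sqrt
  rwa [hρ.posSemidef_sqrt.1] at this

lemma eig_le_one {Λ : Matrix (Fin n) (Fin n) ℂ} (hΛ : Λ.PosSemidef)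
    (hΛ1 : ((1 : Matrix (Fin n) (Fin n) ℂ) - Λ).PosSemidef) (i : Fin n) :
    hΛ.1.eigenvalues i ≤ 1 := by
  set v := ⇑(hΛ.1.eigenvectorBasis i) with hv
  have hvv : star v ⬝ᵥ v = (1:ℂ) := by
    have hin : ⟪hΛ.1.eigenvectorBasis i, hΛ.1.eigenvectorBasis i⟫_ℂ = star v ⬝ᵥ v :=
      (EuclideanSpace.inner_eq_star_dotProduct _ _).trans (dotProduct_comm _ _)
    rw [← hin, inner_self_eq_norm_sq_to_K, hΛ.1.eigenvectorBasis.orthonormal.1 i]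
    norm_num
  have h := hΛ1.re_dotProduct_nonneg v
  rw [sub_mulVec, one_mulVec, dotProduct_sub, map_sub, hvv] at h
  have h2 : star v ⬝ᵥ (Λ *ᵥ v) = ((hΛ.1.eigenvalues i : ℝ) : ℂ) := by
    rw [hΛ.1.mulVec_eigenvectorBasis i, dotProduct_smul, hvv]
    simp [Complex.real_smul]
  rw [h2] at h
  simp at h
  linarith

lemma sandwich_sub_psd (U : Matrix.unitaryGroup (Fin n) ℂ) (d e : Fin n → ℝ)
    (h : ∀ i, e i ≤ d i) :
    ((U : Matrix (Fin n) (Fin n) ℂ) * diagonal (Complex.ofReal ∘ d) *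
        star (U : Matrix (Fin n) (Fin n) ℂ)
      - (U : Matrix (Fin n) (Fin n) ℂ) * diagonal (Complex.ofReal ∘ e) *
        star (U : Matrix (Fin n) (Fin n) ℂ)).PosSemidef := by
  rw [← Matrix.sub_mul, ← Matrix.mul_sub, diagonal_sub]
  apply Matrix.PosSemidef.mul_mul_conjTranspose_same
  refine Matrix.posSemidef_diagonal_iff.mpr fun i => ?_
  simp only [Pi.sub_apply, Function.comp_apply, ← Complex.ofReal_sub]
  exact Complex.zero_le_real.mpr (by linarith [h i])

lemma sqrt_sub_posSemidef {Λ : Matrix (Fin n) (Fin n) ℂ} (hΛ : Λ.PosSemidef)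
    (hΛ1 : ((1 : Matrix (Fin n) (Fin n) ℂ) - Λ).PosSemidef) :
    (hΛ.sqrt - Λ).PosSemidef := by
  have key := sandwich_sub_psd hΛ.1.eigenvectorUnitary
    (Real.sqrt ∘ hΛ.1.eigenvalues) (hΛ.1.eigenvalues)
    (fun i => by
      have h1 : hΛ.1.eigenvalues i ≤ 1 := eig_le_one hΛ hΛ1 i
      have h0 : 0 ≤ hΛ.1.eigenvalues i := hΛ.eigenvalues_nonneg i
      simp only [Function.comp_apply]
      rw [Real.le_sqrt h0 h0]
      nlinarith)
  have hs : hΛ.sqrt = (hΛ.1.eigenvectorUnitary : Matrix (Fin n) (Fin n) ℂ) *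
      diagonal (Complex.ofReal ∘ (Real.sqrt ∘ hΛ.1.eigenvalues)) *
      star (hΛ.1.eigenvectorUnitary : Matrix (Fin n) (Fin n) ℂ) := by
    rw [Matrix.PosSemidef.sqrt]
  have hΛeq : Λ = (hΛ.1.eigenvectorUnitary : Matrix (Fin n) (Fin n) ℂ) *
      diagonal (Complex.ofReal ∘ hΛ.1.eigenvalues) *
      star (hΛ.1.eigenvectorUnitary : Matrix (Fin n) (Fin n) ℂ) := hΛ.1.spectral_theorem
  rw [← hs, ← hΛeq] at key
  exact key

/-- Gentle measurement lemma. -/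
theorem stmt3 {n : ℕ} (ρ Λ : Matrix (Fin n) (Fin n) ℂ)
    (hρ : ρ.PosSemidef) (hρtr : ρ.trace = 1)
    (hΛ : Λ.PosSemidef) (hΛ1 : ((1 : Matrix (Fin n) (Fin n) ℂ) - Λ).PosSemidef)
    (ε : ℝ) (hε0 : 0 ≤ ε) (hε1 : ε < 1)
    (htr : 1 - ε ≤ ((Λ * ρ).trace).re) :
    traceNorm (ρ - ((Λ * ρ).trace)⁻¹ • (hΛ.sqrt * ρ * hΛ.sqrt)) ≤ 2 * Real.sqrt ε := by
  set M := hΛ.sqrt with hMdef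
  set A := hρ.sqrt with hAdef
  have hMH : Mᴴ = M := hΛ.posSemidef_sqrt.1
  have hAH : Aᴴ = A := hρ.posSemidef_sqrt.1
  have hAA : A * A = ρ := hρ.sqrt_mul_self
  have hMM : M * M = Λ := hΛ.sqrt_mul_self
  have hMρM : (M * ρ * M).PosSemidef := by
    have h := hρ.mul_mul_conjTranspose_same M
    rwa [hMH] at h
  have htreq : (Λ * ρ).trace = (M * ρ * M).trace := by
    conv_lhs => rw [← hMM]
    exact (trace_mul_cycle M ρ M).symm
  set pr := ((Λ * ρ).trace).re with hprdef
  have hpr1 : 1 - ε ≤ pr := htr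
  have hprpos : 0 < pr := by linarith
  have htrR : (Λ * ρ).trace = (pr : ℂ) := by
    rw [hprdef, htreq]
    exact trace_eq_re hMρM
  have hAMA : (A * M * A).PosSemidef := by
    have h := hΛ.posSemidef_sqrt.mul_mul_conjTranspose_same A
    rwa [hAH] at h
  have hgeq : (M * ρ).trace = (A * M * A).trace := by
    conv_lhs => rw [← hAA, ← mul_assoc]
    exact trace_mul_cycle M A A
  have hg : (M * ρ).trace = (((M * ρ).trace).re : ℂ) := by
    rw [hgeq]
    exact trace_eq_re hAMA
  set gr := ((M * ρ).trace).re with hgrdef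
  have hgr0 : 0 ≤ gr := by
    rw [hgrdef]
    exact trace_mul_re_nonneg hΛ.posSemidef_sqrt hρ
  have hgrpr : pr ≤ gr := by
    have hMΛ := sqrt_sub_posSemidef hΛ hΛ1
    have h0 := trace_mul_re_nonneg hMΛ hρ
    rw [Matrix.sub_mul, trace_sub, Complex.sub_re] at h0
    rw [hgrdef, hprdef]
    linarith
  set c : ℝ := (Real.sqrt pr)⁻¹ with hcdef
  have hc0 : 0 < c := inv_pos.mpr (Real.sqrt_pos.mpr hprpos)
  have hc2 : c^2 = pr⁻¹ := by
    rw [hcdef, inv_pow, Real.sq_sqrt hprpos.le]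
  have hccpr : c * c * pr = 1 := by
    have : c * c = c^2 := by ring
    rw [this, hc2]
    field_simp
  have hccprC : (c:ℂ) * (c:ℂ) * (pr:ℂ) = 1 := by exact_mod_cast congrArg Complex.ofReal hccpr
  have hc2C : ((c:ℂ))^2 = ((pr:ℂ))⁻¹ := by
    rw [show ((pr:ℂ))⁻¹ = ((pr⁻¹ : ℝ) : ℂ) by push_cast; ring, ← hc2]
    push_cast
    ring
  set X := A - (c:ℂ) • (M * A) with hXdef
  set Y := A + (c:ℂ) • (M * A) with hYdef
  have hstarc : star ((c:ℂ)) = (c:ℂ) := by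
    simp [Complex.star_def, Complex.conj_ofReal]
  have hXH : Xᴴ = A - (c:ℂ) • (A * M) := by
    rw [hXdef, conjTranspose_sub, conjTranspose_smul, conjTranspose_mul, hAH, hMH, hstarc]
  have hYH : Yᴴ = A + (c:ℂ) • (A * M) := by
    rw [hYdef, conjTranspose_add, conjTranspose_smul, conjTranspose_mul, hAH, hMH, hstarc]
  have hDher : (ρ - ((Λ * ρ).trace)⁻¹ • (M * ρ * M)).IsHermitian := by
    apply Matrix.IsHermitian.sub hρ.1
    show ((((Λ * ρ).trace)⁻¹ • (M * ρ * M))ᴴ = _)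
    rw [conjTranspose_smul, hMρM.1, htrR]
    congr 1
    simp [Complex.star_def, Complex.conj_ofReal]
  have hXYD : ρ - ((Λ * ρ).trace)⁻¹ • (M * ρ * M) = (2:ℂ)⁻¹ • (X * Yᴴ + Y * Xᴴ) := by
    rw [hXH, hYH, hXdef, hYdef, htrR, ← hc2C]
    conv_lhs => rw [← hAA]
    simp only [Matrix.sub_mul, Matrix.mul_sub, Matrix.add_mul, Matrix.mul_add,
      Matrix.smul_mul, Matrix.mul_smul, smul_smul, smul_add, smul_sub, Matrix.mul_assoc]
    module
  -- traces
  have htrAA : (A * A).trace = 1 := by rw [hAA, hρtr]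
  have htrAMA : (A * (M * A)).trace = (gr : ℂ) := by
    rw [← mul_assoc, trace_mul_cycle A M A, hAA, trace_mul_comm ρ M, hg]
  have htrAMA' : ((A * M) * A).trace = (gr : ℂ) := by
    rw [mul_assoc]
    exact htrAMA
  have htrAMMA : ((A * M) * (M * A)).trace = (pr : ℂ) := by
    rw [show (A * M) * (M * A) = A * (M * M) * A by noncomm_ring, hMM,
      trace_mul_cycle A Λ A, hAA, trace_mul_comm ρ Λ, htrR]
  have hXtr : ((Xᴴ * X).trace) = ((2 - 2*(c*gr) : ℝ) : ℂ) := by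
    have e : Xᴴ * X = A*A - (c:ℂ)•(A*(M*A)) - ((c:ℂ)•((A*M)*A)
        - ((c:ℂ)*(c:ℂ))•((A*M)*(M*A))) := by
      rw [hXH, hXdef]
      simp only [Matrix.sub_mul, Matrix.mul_sub, Matrix.smul_mul, Matrix.mul_smul, smul_smul]
      module
    rw [e]
    simp only [trace_sub, trace_smul, htrAA, htrAMA, htrAMA', htrAMMA]
    push_cast
    simp only [smul_eq_mul]
    linear_combination hccprC
  have hYtr : ((Yᴴ * Y).trace) = ((2 + 2*(c*gr) : ℝ) : ℂ) := by
    have e : Yᴴ * Y = A*A + (c:ℂ)•(A*(M*A)) + ((c:ℂ)•((A*M)*A)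
        + ((c:ℂ)*(c:ℂ))•((A*M)*(M*A))) := by
      rw [hYH, hYdef]
      simp only [Matrix.add_mul, Matrix.mul_add, Matrix.smul_mul, Matrix.mul_smul, smul_smul]
      module
    rw [e]
    simp only [trace_add, trace_smul, htrAA, htrAMA, htrAMA', htrAMMA]
    push_cast
    simp only [smul_eq_mul]
    linear_combination hccprC
  have hX0 : 0 ≤ 2 - 2*(c*gr) := by
    have h := trace_re_nonneg (posSemidef_conjTranspose_mul_self X)
    rw [hXtr] at h
    simpa using h
  have hkey := key_bound hDher hXYD
  rw [hXtr, hYtr] at hkey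
  simp only [Complex.ofReal_re] at hkey
  refine le_trans hkey ?_
  rw [← Real.sqrt_mul hX0]
  have h1 : pr ≤ (c*gr)^2 := by
    rw [mul_pow, hc2]
    have h2 : pr * pr ≤ gr^2 := by nlinarith
    calc pr = pr⁻¹ * (pr * pr) := by field_simp
    _ ≤ pr⁻¹ * gr^2 := by
        apply mul_le_mul_of_nonneg_left h2 (inv_nonneg.mpr hprpos.le)
  have hfin : (2 - 2*(c*gr)) * (2 + 2*(c*gr)) ≤ 4*ε := by nlinarith
  refine le_trans (Real.sqrt_le_sqrt hfin) ?_
  rw [show (4:ℝ)*ε = 2^2*ε by ring, Real.sqrt_mul (by positivity), Real.sqrt_sq (by norm_num)]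
end

section
/- Let S be a finite set, l ∈ ℕ, and f : S^l → [0,1]. Suppose that for every probability distribution q on S that is an l-type (i.e., q(s) = N(s)/l for integer counts N(s)), we have Σ_{s^l ∈ S^l} f(s^l) · ∏_{i=1}^l q(s_i) ≥ 1 − γ for some γ ∈ [0,1]. Then for every s^l ∈ S^l, (1/l!) Σ_{σ ∈ 𝔖_l} f(σ(s^l)) ≥ 1 − (l+1)^{|S|} · γ, where σ(s^l) = (s_{σ(1)},…,s_{σ(l)}) (Ahlswede's robustification). -/
open Finset

-- factorial lemmas
lemma aux_fact_le (N k : ℕ) : N.factorial * N ^ k ≤ (N + k).factorial := by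
  induction k with
  | zero => simp
  | succ k ih =>
    rw [pow_succ, ← mul_assoc]
    calc N.factorial * N ^ k * N ≤ (N + k).factorial * (N + k + 1) :=
          Nat.mul_le_mul ih (by omega)
      _ = (N + (k+1)).factorial := by
          have : N + (k+1) = (N + k) + 1 := by ring
          rw [this, Nat.factorial_succ]; ring

lemma aux_le_fact (M k : ℕ) : (M + k).factorial ≤ M.factorial * (M + k) ^ k := by
  induction k with
  | zero => simp
  | succ k ih =>
    have h1 : (M + (k+1)).factorial = (M + k + 1) * (M + k).factorial := by
      have : M + (k+1) = (M + k) + 1 := by ring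
      rw [this, Nat.factorial_succ]
    rw [h1]
    calc (M + k + 1) * (M + k).factorial ≤ (M + k + 1) * (M.factorial * (M + k) ^ k) :=
          Nat.mul_le_mul_left _ ih
      _ ≤ (M + (k+1)) * (M.factorial * (M + (k+1)) ^ k) := by
          refine Nat.mul_le_mul (by omega) (Nat.mul_le_mul_left _ (Nat.pow_le_pow_left (by omega) _))
      _ = M.factorial * (M + (k+1)) ^ (k+1) := by rw [pow_succ]; ring

lemma aux_natfact (N M : ℕ) : N.factorial * N ^ M ≤ M.factorial * N ^ N := by
  rcases le_total N M with h | h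
  · obtain ⟨k, rfl⟩ := Nat.exists_eq_add_of_le h
    calc N.factorial * N ^ (N + k) = (N.factorial * N ^ k) * N ^ N := by rw [pow_add]; ring
      _ ≤ (N + k).factorial * N ^ N := Nat.mul_le_mul_right _ (aux_fact_le N k)
  · obtain ⟨k, rfl⟩ := Nat.exists_eq_add_of_le h
    calc (M + k).factorial * (M + k) ^ M ≤ (M.factorial * (M + k) ^ k) * (M + k) ^ M :=
          Nat.mul_le_mul_right _ (aux_le_fact M k)
      _ = M.factorial * (M + k) ^ (M + k) := by rw [pow_add]; ring

section counting
variable {S : Type*} [Fintype S] [DecidableEq S] {l : ℕ}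

/-- count of s in the word v -/
def acnt (v : Fin l → S) (s : S) : ℕ := (univ.filter fun i => v i = s).card

lemma acnt_sum (v : Fin l → S) : ∑ s, acnt v s = l := by
  have h := card_eq_sum_card_fiberwise (f := v) (s := univ) (t := univ)
    (fun i _ => mem_univ (v i))
  simpa [acnt] using h.symm

lemma acnt_prod {R : Type*} [CommMonoid R] (v : Fin l → S) (g : S → R) :
    ∏ i, g (v i) = ∏ s, g s ^ acnt v s := by
  rw [← prod_fiberwise_of_maps_to (fun i (_ : i ∈ univ) => mem_univ (v i)) (fun i => g (v i))]
  refine Finset.prod_congr rfl fun s _ => ?_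
  rw [Finset.prod_congr rfl (fun i hi => by rw [(mem_filter.1 hi).2] : ∀ i ∈ univ.filter fun i => v i = s, g (v i) = g s), prod_const, acnt]

lemma acnt_comp (v : Fin l → S) (σ : Equiv.Perm (Fin l)) : acnt (v ∘ σ) = acnt v := by
  funext s
  rw [acnt, acnt, ← Fintype.card_subtype, ← Fintype.card_subtype]
  exact Fintype.card_congr (σ.subtypeEquiv fun i => Iff.rfl)

lemma acnt_trans {v w : Fin l → S} (h : acnt v = acnt w) : ∃ σ : Equiv.Perm (Fin l), w ∘ σ = v := by
  have e : ∀ s, {i // v i = s} ≃ {i // w i = s} := fun s => Fintype.equivOfCardEq (by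
    rw [Fintype.card_subtype, Fintype.card_subtype]; exact congrFun h s)
  exact ⟨Equiv.ofFiberEquiv e, funext fun i => Equiv.ofFiberEquiv_map e i⟩

/-- stabilizer cardinality -/
lemma acnt_stab (w : Fin l → S) :
    Fintype.card {σ : Equiv.Perm (Fin l) // w ∘ σ = w} = ∏ s, (acnt w s).factorial := by
  have E : {σ : Equiv.Perm (Fin l) // w ∘ σ = w} ≃ ∀ s, Equiv.Perm {i // w i = s} :=
    { toFun := fun σ s => σ.1.subtypePerm (p := fun i => w i = s)
        (fun i => by have h : w (σ.1 i) = w i := congrFun σ.2 i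
                     simp only [h])
      invFun := fun π => ⟨Equiv.ofFiberEquiv (f := w) (g := w) π,
        funext fun i => Equiv.ofFiberEquiv_map π i⟩
      left_inv := fun σ => Subtype.ext (Equiv.ext fun i => by
        simp [Equiv.ofFiberEquiv, Equiv.Perm.subtypePerm])
      right_inv := fun π => funext fun s => Equiv.ext fun x => Subtype.ext (by
        obtain ⟨i, hi⟩ := x
        subst hi
        simp [Equiv.ofFiberEquiv, Equiv.Perm.subtypePerm]
        rfl) }
  rw [Fintype.card_congr E, Fintype.card_pi]
  exact Finset.prod_congr rfl fun s _ => by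
    rw [Fintype.card_perm, Fintype.card_subtype]; rfl

end counting

section counting2
variable {S : Type*} [Fintype S] [DecidableEq S] {l : ℕ}

lemma acnt_fiber (v u : Fin l → S) (σ₀ : Equiv.Perm (Fin l)) (h0 : v ∘ σ₀ = u) :
    (univ.filter fun σ : Equiv.Perm (Fin l) => v ∘ σ = u).card = ∏ s, (acnt v s).factorial := by
  have hcard : (univ.filter fun σ : Equiv.Perm (Fin l) => v ∘ σ = u).card
      = (univ.filter fun σ : Equiv.Perm (Fin l) => v ∘ σ = v).card := by
    refine card_bij' (fun σ _ => σ * σ₀⁻¹) (fun τ _ => τ * σ₀) ?_ ?_ ?_ ?_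
    · intro σ hσ
      simp only [mem_filter, mem_univ, true_and] at hσ ⊢
      funext i
      have h1 : v (σ (σ₀⁻¹ i)) = u (σ₀⁻¹ i) := congrFun hσ _
      have h2 : v (σ₀ (σ₀⁻¹ i)) = u (σ₀⁻¹ i) := congrFun h0 _
      simp only [Function.comp, Equiv.Perm.mul_apply]
      rw [h1, ← h2, (Equiv.Perm.eq_inv_iff_eq (f := σ₀) (y := i)).mp rfl]
    · intro τ hτ
      simp only [mem_filter, mem_univ, true_and] at hτ ⊢
      funext i
      have h1 : v (τ (σ₀ i)) = v (σ₀ i) := congrFun hτ _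
      have h2 : v (σ₀ i) = u i := congrFun h0 i
      simp only [Function.comp, Equiv.Perm.mul_apply]
      rw [h1, h2]
    · intro σ _; simp [mul_assoc]
    · intro τ _; simp [mul_assoc]
  rw [hcard, ← acnt_stab v, Fintype.card_subtype]

lemma acnt_orbit (v : Fin l → S) :
    (univ.filter fun u : Fin l → S => acnt u = acnt v).card * (∏ s, (acnt v s).factorial)
      = l.factorial := by
  have himg : (univ : Finset (Equiv.Perm (Fin l))).image (fun σ : Equiv.Perm (Fin l) => v ∘ σ)
      = univ.filter fun u : Fin l → S => acnt u = acnt v := by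
    ext u
    simp only [mem_image, mem_univ, true_and, mem_filter]
    constructor
    · rintro ⟨σ, rfl⟩; exact acnt_comp v σ
    · intro h; obtain ⟨σ, hσ⟩ := acnt_trans h; exact ⟨σ, hσ⟩
  have hfact : l.factorial = (univ : Finset (Equiv.Perm (Fin l))).card := by
    rw [card_univ, Fintype.card_perm, Fintype.card_fin]
  rw [hfact, card_eq_sum_card_fiberwise
    (f := fun σ : Equiv.Perm (Fin l) => v ∘ σ)
    (t := (univ : Finset (Equiv.Perm (Fin l))).image (fun σ : Equiv.Perm (Fin l) => v ∘ σ))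
    (fun σ _ => mem_image_of_mem _ (mem_univ σ)), himg]
  rw [Finset.sum_congr rfl (fun u hu => ?_), sum_const, smul_eq_mul]
  rw [← himg] at hu
  obtain ⟨σ₀, _, h0⟩ := mem_image.1 hu
  exact acnt_fiber v u σ₀ h0

end counting2

section counting3
variable {S : Type*} [Fintype S] [DecidableEq S] {l : ℕ}

lemma acnt_le (v : Fin l → S) (s : S) : acnt v s ≤ l := by
  calc acnt v s ≤ (univ : Finset (Fin l)).card := card_le_card (filter_subset _ _)
    _ = l := by simp

lemma type_card_le :
    ((univ : Finset (Fin l → S)).image acnt).card ≤ (l + 1) ^ Fintype.card S := by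
  classical
  have h : ((univ : Finset (Fin l → S)).image acnt).card
      ≤ (univ : Finset (S → Fin (l+1))).card := by
    refine card_le_card_of_injOn
      (fun m s => (⟨min (m s) l, by omega⟩ : Fin (l+1))) (fun m _ => mem_univ _) ?_
    intro m hm m' hm' hmm
    simp only [mem_coe, mem_image, mem_univ, true_and] at hm hm'
    obtain ⟨v, rfl⟩ := hm
    obtain ⟨v', rfl⟩ := hm'
    funext s
    have h1 := congrFun hmm s
    have h2 : min (acnt v s) l = acnt v s := min_eq_left (acnt_le v s)
    have h3 : min (acnt v' s) l = acnt v' s := min_eq_left (acnt_le v' s)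
    have := Fin.mk.injEq _ _ _ _ ▸ h1
    simp only [Fin.mk.injEq] at h1
    rw [h2, h3] at h1
    exact h1
  rw [card_univ, Fintype.card_fun, Fintype.card_fin] at h
  exact h

lemma acnt_max (v w : Fin l → S) :
    (univ.filter fun u : Fin l → S => acnt u = acnt v).card * ∏ s, acnt w s ^ acnt v s
      ≤ (univ.filter fun u : Fin l → S => acnt u = acnt w).card * ∏ s, acnt w s ^ acnt w s := by
  set cm := (univ.filter fun u : Fin l → S => acnt u = acnt v).card with hcm
  set c := (univ.filter fun u : Fin l → S => acnt u = acnt w).card with hc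
  have h1 : cm * ∏ s, (acnt v s).factorial = l.factorial := acnt_orbit v
  have h2 : c * ∏ s, (acnt w s).factorial = l.factorial := acnt_orbit w
  have key : (∏ s, (acnt w s).factorial * acnt w s ^ acnt v s)
      ≤ ∏ s, (acnt v s).factorial * acnt w s ^ acnt w s :=
    Finset.prod_le_prod' fun s _ => aux_natfact (acnt w s) (acnt v s)
  have K : 0 < (∏ s, (acnt v s).factorial) * ∏ s, (acnt w s).factorial :=
    Nat.mul_pos (Finset.prod_pos fun s _ => Nat.factorial_pos _)
      (Finset.prod_pos fun s _ => Nat.factorial_pos _)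
  refine Nat.le_of_mul_le_mul_right ?_ K
  calc cm * (∏ s, acnt w s ^ acnt v s) * ((∏ s, (acnt v s).factorial) * ∏ s, (acnt w s).factorial)
      = (cm * ∏ s, (acnt v s).factorial) * ∏ s, (acnt w s).factorial * acnt w s ^ acnt v s := by
        rw [Finset.prod_mul_distrib]; ring
    _ = l.factorial * ∏ s, (acnt w s).factorial * acnt w s ^ acnt v s := by rw [h1]
    _ ≤ l.factorial * ∏ s, (acnt v s).factorial * acnt w s ^ acnt w s :=
        Nat.mul_le_mul_left _ key
    _ = (c * ∏ s, (acnt w s).factorial) * ∏ s, (acnt v s).factorial * acnt w s ^ acnt w s := by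
        rw [h2]
    _ = c * (∏ s, acnt w s ^ acnt w s) * ((∏ s, (acnt v s).factorial) * ∏ s, (acnt w s).factorial) := by
        rw [Finset.prod_mul_distrib]; ring

end counting3

/-- Ahlswede's robustification technique. -/
theorem stmt5 {S : Type*} [Fintype S] [DecidableEq S] (l : ℕ) (hl : 0 < l)
    (f : (Fin l → S) → ℝ) (hf : ∀ w, f w ∈ Set.Icc (0:ℝ) 1)
    (γ : ℝ) (hγ : γ ∈ Set.Icc (0:ℝ) 1)
    (H : ∀ q : S → ℝ, (∀ s, 0 ≤ q s) → (∑ s, q s = 1) →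
      (∀ s, ∃ k : ℕ, q s = (k : ℝ) / l) →
      1 - γ ≤ ∑ w : Fin l → S, f w * ∏ i, q (w i)) :
    ∀ w : Fin l → S,
      1 - ((l : ℝ) + 1) ^ (Fintype.card S) * γ ≤
        (1 / (Nat.factorial l : ℝ)) * ∑ σ : Equiv.Perm (Fin l), f (w ∘ σ) := by
  intro w
  classical
  obtain ⟨hγ0, hγ1⟩ := hγ
  have hl' : (0:ℝ) < l := by exact_mod_cast hl
  set N : S → ℕ := acnt w with hN
  set q : S → ℝ := fun s => (N s : ℝ) / l with hqdef
  have hq0 : ∀ s, 0 ≤ q s := fun s => by positivity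
  have hq1 : ∑ s, q s = 1 := by
    rw [hqdef]
    rw [← Finset.sum_div]
    rw [show ∑ s, ((N s : ℕ) : ℝ) = ((∑ s, N s : ℕ) : ℝ) by push_cast; ring]
    rw [hN, acnt_sum w]
    exact div_self (ne_of_gt hl')
  have hH := H q hq0 hq1 (fun s => ⟨N s, rfl⟩)
  -- basic objects
  set T : Finset (Fin l → S) := univ.filter fun u => acnt u = N with hT
  set c : ℕ := T.card with hc
  set p : ℝ := ∏ s, q s ^ N s with hp
  set st : ℕ := ∏ s, (N s).factorial with hst
  have hPeq : ∀ u : Fin l → S, ∏ i, q (u i) = ∏ s, q s ^ acnt u s := fun u => acnt_prod u q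
  have hp_pos : 0 < p := by
    rw [hp]
    refine Finset.prod_pos fun s _ => ?_
    rcases Nat.eq_zero_or_pos (N s) with h | h
    · rw [h, pow_zero]; exact one_pos
    · exact pow_pos (div_pos (by exact_mod_cast h) hl') _
  have hwT : w ∈ T := by rw [hT]; simp [hN]
  have hc_pos : 0 < c := card_pos.2 ⟨w, hwT⟩
  have hc_pos' : (0:ℝ) < c := by exact_mod_cast hc_pos
  have horb : c * st = l.factorial := acnt_orbit w
  have hstc : (st : ℝ) * c = (l.factorial : ℝ) := by
    exact_mod_cast (mul_comm (c:ℕ) st ▸ congrArg (Nat.cast (R := ℝ)) horb)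
  -- total probability one
  have hPsum : ∑ u : Fin l → S, ∏ i, q (u i) = 1 := by
    rw [← Fintype.sum_pow q l, hq1, one_pow]
  have hPnonneg : ∀ u : Fin l → S, 0 ≤ ∏ i, q (u i) :=
    fun u => Finset.prod_nonneg fun i _ => hq0 _
  have hPT : ∀ u ∈ T, ∏ i, q (u i) = p := by
    intro u hu
    rw [hPeq u, (mem_filter.1 hu).2]
  have hTsum : ∑ u ∈ T, ∏ i, q (u i) = c * p := by
    rw [Finset.sum_congr rfl hPT, sum_const, nsmul_eq_mul, hc]
  -- split the hypothesis sum over T and its complement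
  have hsplit := Finset.sum_filter_add_sum_filter_not univ (fun u : Fin l → S => acnt u = N)
    (fun u => f u * ∏ i, q (u i))
  have hsplitP := Finset.sum_filter_add_sum_filter_not univ (fun u : Fin l → S => acnt u = N)
    (fun u => ∏ i, q (u i))
  have hfT : ∑ u ∈ T, f u * ∏ i, q (u i) = (∑ u ∈ T, f u) * p := by
    rw [Finset.sum_congr rfl (fun u hu => by rw [hPT u hu]), ← Finset.sum_mul]
  have hnotT_le : ∑ u ∈ univ.filter (fun u : Fin l → S => ¬ acnt u = N), f u * ∏ i, q (u i)
      ≤ 1 - c * p := by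
    calc ∑ u ∈ univ.filter (fun u : Fin l → S => ¬ acnt u = N), f u * ∏ i, q (u i)
        ≤ ∑ u ∈ univ.filter (fun u : Fin l → S => ¬ acnt u = N), ∏ i, q (u i) := by
          refine Finset.sum_le_sum fun u _ => ?_
          have := (hf u).2
          nlinarith [hPnonneg u]
      _ = 1 - c * p := by
          have : ∑ u ∈ T, ∏ i, q (u i)
              + ∑ u ∈ univ.filter (fun u : Fin l → S => ¬ acnt u = N), ∏ i, q (u i) = 1 := by
            rw [← hPsum]; exact hsplitP
          linarith [hTsum, this]
  have hA : (c:ℝ) * p - γ ≤ (∑ u ∈ T, f u) * p := by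
    have h1 : (∑ u ∈ T, f u) * p
        + ∑ u ∈ univ.filter (fun u : Fin l → S => ¬ acnt u = N), f u * ∏ i, q (u i)
        = ∑ u : Fin l → S, f u * ∏ i, q (u i) := by rw [← hfT, hsplit]
    linarith [hH, hnotT_le, h1]
  -- maximality of the own-type class
  have hmaxR : ∀ m ∈ (univ : Finset (Fin l → S)).image acnt,
      ∑ u ∈ univ.filter (fun u : Fin l → S => acnt u = m), ∏ i, q (u i) ≤ c * p := by
    intro m hm
    obtain ⟨v, -, rfl⟩ := mem_image.1 hm
    have hsum : ∑ u ∈ univ.filter (fun u : Fin l → S => acnt u = acnt v), ∏ i, q (u i)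
        = ((univ.filter fun u : Fin l → S => acnt u = acnt v).card : ℝ)
          * ∏ s, q s ^ acnt v s := by
      rw [Finset.sum_congr rfl (fun u hu => by rw [hPeq u, (mem_filter.1 hu).2]),
        sum_const, nsmul_eq_mul]
    rw [hsum]
    -- rewrite both sides over common denominator l^l
    have hql : ∀ (m' : S → ℕ), (∑ s, m' s = l) →
        ∏ s, q s ^ m' s = ((∏ s, N s ^ m' s : ℕ) : ℝ) / (l:ℝ)^l := by
      intro m' hm'
      rw [hqdef]
      simp only [div_pow]
      rw [Finset.prod_div_distrib, Finset.prod_pow_eq_pow_sum, hm']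
      congr 1
      push_cast
      rfl
    have hvl : ∑ s, acnt v s = l := acnt_sum v
    have hNl : ∑ s, N s = l := by rw [hN]; exact acnt_sum w
    have e1 : ∏ s, q s ^ acnt v s = ((∏ s, N s ^ acnt v s : ℕ):ℝ) / (l:ℝ)^l := hql _ hvl
    have e2 : p = ((∏ s, N s ^ N s : ℕ):ℝ) / (l:ℝ)^l := by rw [hp]; exact hql _ hNl
    rw [e1, e2, ← mul_div_assoc, ← mul_div_assoc,
      div_le_div_iff_of_pos_right (by positivity : (0:ℝ) < (l:ℝ)^l)]
    have hnat := acnt_max v w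
    rw [hc, hT, hN]
    exact_mod_cast hnat
  -- probability of own-type class at least (l+1)^(-|S|)
  have h1le : 1 ≤ ((l : ℝ) + 1) ^ (Fintype.card S) * ((c:ℝ) * p) := by
    have hgroup : ∑ m ∈ (univ : Finset (Fin l → S)).image acnt,
        ∑ u ∈ univ.filter (fun u : Fin l → S => acnt u = m), ∏ i, q (u i) = 1 := by
      rw [Finset.sum_fiberwise_of_maps_to (fun u _ => mem_image_of_mem acnt (mem_univ u)),
        hPsum]
    have hle1 : (1:ℝ) ≤ (((univ : Finset (Fin l → S)).image acnt).card : ℝ) * ((c:ℝ) * p) := by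
      rw [← hgroup]
      calc ∑ m ∈ (univ : Finset (Fin l → S)).image acnt,
          ∑ u ∈ univ.filter (fun u : Fin l → S => acnt u = m), ∏ i, q (u i)
          ≤ ∑ _m ∈ (univ : Finset (Fin l → S)).image acnt, (c:ℝ) * p :=
            Finset.sum_le_sum hmaxR
        _ = (((univ : Finset (Fin l → S)).image acnt).card : ℝ) * ((c:ℝ) * p) := by
            rw [sum_const, nsmul_eq_mul]
    have hcardle : (((univ : Finset (Fin l → S)).image acnt).card : ℝ)
        ≤ ((l : ℝ) + 1) ^ (Fintype.card S) := by
      have h := type_card_le (S := S) (l := l)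
      calc (((univ : Finset (Fin l → S)).image acnt).card : ℝ)
          ≤ (((l + 1) ^ Fintype.card S : ℕ) : ℝ) := by exact_mod_cast h
        _ = ((l : ℝ) + 1) ^ (Fintype.card S) := by push_cast; ring
    have hmul := mul_le_mul_of_nonneg_right hcardle
      (le_of_lt (mul_pos hc_pos' hp_pos))
    linarith [hle1, hmul]
  -- the permutation sum equals st * (sum over T)
  have hperm : ∑ σ : Equiv.Perm (Fin l), f (w ∘ σ) = (st : ℝ) * ∑ u ∈ T, f u := by
    have himg : (univ : Finset (Equiv.Perm (Fin l))).image (fun σ : Equiv.Perm (Fin l) => w ∘ σ)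
        = T := by
      rw [hT]
      ext u
      simp only [mem_image, mem_univ, true_and, mem_filter]
      constructor
      · rintro ⟨σ, rfl⟩; rw [hN]; exact acnt_comp w σ
      · intro h; rw [hN] at h; obtain ⟨σ, hσ⟩ := acnt_trans h; exact ⟨σ, hσ⟩
    rw [← Finset.sum_fiberwise_of_maps_to
      (g := fun σ : Equiv.Perm (Fin l) => w ∘ σ)
      (t := (univ : Finset (Equiv.Perm (Fin l))).image (fun σ : Equiv.Perm (Fin l) => w ∘ σ))
      (fun σ _ => mem_image_of_mem _ (mem_univ σ)) (fun σ => f (w ∘ σ))]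
    rw [himg, Finset.mul_sum]
    refine Finset.sum_congr rfl fun u hu => ?_
    have hu' : u ∈ (univ : Finset (Equiv.Perm (Fin l))).image
        (fun σ : Equiv.Perm (Fin l) => w ∘ σ) := by rw [himg]; exact hu
    obtain ⟨σ₀, -, h0⟩ := mem_image.1 hu'
    rw [Finset.sum_congr rfl (fun σ hσ => by rw [(mem_filter.1 hσ).2]),
      sum_const, nsmul_eq_mul, acnt_fiber w u σ₀ h0, ← hN, ← hst]
  -- final arithmetic
  rw [hperm]
  set Sf : ℝ := ∑ u ∈ T, f u with hSf
  have hfl_pos : (0:ℝ) < (l.factorial : ℝ) := by exact_mod_cast l.factorial_pos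
  have hst_pos : (0:ℝ) < (st : ℝ) := by
    have : 0 < st := Finset.prod_pos fun s _ => Nat.factorial_pos _
    exact_mod_cast this
  have key : (1 / (l.factorial : ℝ)) * ((st:ℝ) * Sf) = Sf / c := by
    rw [← hstc]
    field_simp
  rw [key, le_div_iff₀ hc_pos']
  have h3 : γ * 1 ≤ γ * (((l : ℝ) + 1) ^ (Fintype.card S) * ((c:ℝ) * p)) :=
    mul_le_mul_of_nonneg_left h1le hγ0
  have h4 : (1 - ((l : ℝ) + 1) ^ (Fintype.card S) * γ) * (c:ℝ) * p ≤ Sf * p := by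
    nlinarith [hA, h3]
  exact le_of_mul_le_mul_right h4 hp_pos
end
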